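/- Let L be a countable relational first-order language and let K be a nonempty strong Fraïssé class of finite (equivalently, finitely generated) L-structures with only countably many members up to isomorphism, and let M be the countable ultrahomogeneous L-structure whose age is K. Define a ≡ b for a, b ∈ M iff a and b satisfy the same atomic formulas with all parameter tuples from M. Then every ≡-equivalence class of M has either exactly one element or is infinite. -/

import Mathlib

open FirstOrder FirstOrder.Language Set Cardinal

universe u

/-- `a ≡ b` : `a` and `b` satisfy the same atomic formulas with arbitrary parameter tuples. -/
def AtomEquiv (L : FirstOrder.Language.{u, u}) (M : Type u) [L.Structure M] (a b : M) : Prop :=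
  ∀ (n : ℕ) (φ : L.Formula (Fin (n + 1))), φ.IsAtomic →
    ∀ c : Fin n → M, (φ.Realize (Fin.cons a c) ↔ φ.Realize (Fin.cons b c))

/-- A class of structures has the strong amalgamation property if any two embeddings
between members have an amalgam whose images intersect exactly in the image of the base. -/
def StrongAmalgamation {L : FirstOrder.Language.{u, u}}
    (K : Set (CategoryTheory.Bundled.{u} L.Structure)) : Prop :=
  ∀ (A B C : CategoryTheory.Bundled.{u} L.Structure) (i₁ : A ↪[L] B) (i₂ : A ↪[L] C),
    A ∈ K → B ∈ K → C ∈ K →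
      ∃ (D : CategoryTheory.Bundled.{u} L.Structure) (j₁ : B ↪[L] D) (j₂ : C ↪[L] D),
        D ∈ K ∧ j₁.comp i₁ = j₂.comp i₂ ∧
          Set.range j₁ ∩ Set.range j₂ = Set.range (j₁.comp i₁)

lemma atomEquiv_refl (L : FirstOrder.Language.{u, u}) (M : Type u) [L.Structure M] (a : M) :
    AtomEquiv L M a a := fun _ _ _ _ => Iff.rfl

lemma atomEquiv_map {L : FirstOrder.Language.{u, u}} {M : Type u} [L.Structure M]
    (τ : M ≃[L] M) {a b : M} (h : AtomEquiv L M b a) : AtomEquiv L M (τ b) (τ a) := by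
  intro n φ hφ c
  have key : ∀ x : M, (Fin.cons (τ x) c : Fin (n + 1) → M) = τ ∘ Fin.cons x (τ.symm ∘ c) := by
    intro x
    funext i
    refine Fin.cases ?_ ?_ i <;> simp
  rw [key b, key a, StrongHomClass.realize_formula, StrongHomClass.realize_formula]
  exact h n φ hφ _

/-- Let `K` be a nonempty strong Fraïssé class of finite structures in a
countable relational language, with countably many members up to isomorphism, and let `M` be
the countable ultrahomogeneous structure with age `K`. Then every `≡`-equivalence class of `M`
has exactly one element or is infinite. -/
theorem equiv_classes_singleton_or_infinite {L : FirstOrder.Language.{u, u}}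
    [L.IsRelational] (hL : L.card ≤ ℵ₀)
    (K : Set (CategoryTheory.Bundled.{u} L.Structure))
    (hK : L.IsFraisse K)
    (hfin : ∀ A : CategoryTheory.Bundled.{u} L.Structure, A ∈ K → Finite A)
    (hSAP : StrongAmalgamation K)
    (M : Type u) [L.Structure M] [Countable M]
    (hhom : L.IsUltrahomogeneous M) (hage : L.age M = K) :
    ∀ a : M, {b : M | AtomEquiv L M b a} = {a} ∨ {b : M | AtomEquiv L M b a}.Infinite := by
  intro a
  by_cases hsing : ∀ b : M, AtomEquiv L M b a → b = a
  · left
    apply Set.eq_singleton_iff_unique_mem.2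
    exact ⟨atomEquiv_refl L M a, hsing⟩
  · right
    push_neg at hsing
    obtain ⟨b, hb, hba⟩ := hsing
    by_contra hinf
    rw [Set.not_infinite] at hinf
    set E : Set M := {b : M | AtomEquiv L M b a} with hE
    -- substructures
    set SB : L.Substructure M := Substructure.closure L E with hSB
    set SA : L.Substructure M := Substructure.closure L (E \ {b}) with hSA
    have hle : SA ≤ SB := Substructure.closure_mono (Set.diff_subset)
    have memB : ∀ x : M, x ∈ SB ↔ x ∈ E := fun x =>
      Substructure.mem_closure_iff_of_isRelational L E x
    have memA : ∀ x : M, x ∈ SA ↔ x ∈ E \ {b} := fun x =>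
      Substructure.mem_closure_iff_of_isRelational L (E \ {b}) x
    have fgB : SB.FG := Substructure.fg_def.2 ⟨E, hinf, rfl⟩
    have fgA : SA.FG := Substructure.fg_def.2 ⟨E \ {b}, hinf.diff, rfl⟩
    -- bundled structures
    let Ab : CategoryTheory.Bundled.{u} L.Structure := ⟨↥SA, inferInstance⟩
    let Bb : CategoryTheory.Bundled.{u} L.Structure := ⟨↥SB, inferInstance⟩
    have hAK : Ab ∈ K := by
      rw [← hage]
      exact ⟨(Substructure.fg_iff_structure_fg SA).1 fgA, ⟨SA.subtype⟩⟩
    have hBK : Bb ∈ K := by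
      rw [← hage]
      exact ⟨(Substructure.fg_iff_structure_fg SB).1 fgB, ⟨SB.subtype⟩⟩
    let i : Ab ↪[L] Bb := Substructure.inclusion hle
    obtain ⟨D, j₁, j₂, hDK, hcomp, hint⟩ := hSAP Ab Bb Bb i i hAK hBK hBK
    obtain ⟨hDfg, ⟨e⟩⟩ : D ∈ L.age M := hage ▸ hDK
    obtain ⟨g₁, hg₁⟩ := hhom SB fgB (e.comp j₁)
    obtain ⟨g₂, hg₂⟩ := hhom SB fgB (e.comp j₂)
    have hg₁' : ∀ x : SB, e (j₁ x) = g₁ x := fun x => DFunLike.congr_fun hg₁ x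
    have hg₂' : ∀ x : SB, e (j₂ x) = g₂ x := fun x => DFunLike.congr_fun hg₂ x
    let τ : M ≃[L] M := g₁.symm.comp g₂
    -- τ fixes SA pointwise
    have hτA : ∀ x : M, x ∈ SA → τ x = x := by
      intro x hx
      have h1 : j₁ (i ⟨x, hx⟩) = j₂ (i ⟨x, hx⟩) := DFunLike.congr_fun hcomp ⟨x, hx⟩
      have h2 : g₁ ((i ⟨x, hx⟩ : SB) : M) = g₂ ((i ⟨x, hx⟩ : SB) : M) := by
        rw [← hg₁' _, ← hg₂' _, h1]
      have hco : ((i ⟨x, hx⟩ : SB) : M) = x := rfl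
      rw [hco] at h2
      show g₁.symm (g₂ x) = x
      rw [← h2]
      exact g₁.toEquiv.symm_apply_apply x
    have haA : a ∈ SA := (memA a).2 ⟨atomEquiv_refl L M a, fun h => hba (Eq.symm h)⟩
    have hτa : τ a = a := hτA a haA
    have hbB : b ∈ SB := (memB b).2 hb
    -- the new element
    have hcE : AtomEquiv L M (τ b) a := by
      have := atomEquiv_map τ hb
      rwa [hτa] at this
    -- τ b ∉ E
    have hcnE : τ b ∉ E := by
      intro hcE'
      have hcB : τ b ∈ SB := (memB _).2 hcE'
      have key : e (j₁ ⟨τ b, hcB⟩) = e (j₂ ⟨b, hbB⟩) := by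
        rw [hg₁' _, hg₂' _]
        show g₁ (g₁.symm (g₂ b)) = g₂ b
        exact g₁.toEquiv.apply_symm_apply _
      have key2 : j₁ ⟨τ b, hcB⟩ = j₂ ⟨b, hbB⟩ := e.injective key
      have hmem : j₂ ⟨b, hbB⟩ ∈ Set.range j₁ ∩ Set.range j₂ :=
        ⟨⟨_, key2⟩, ⟨_, rfl⟩⟩
      rw [hint] at hmem
      obtain ⟨x, hx⟩ := hmem
      have hx1 : j₁ (i x) = j₂ ⟨b, hbB⟩ := hx
      have hx1' : j₁ (i x) = j₂ (i x) := DFunLike.congr_fun hcomp x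
      have hx2 : j₂ (i x) = j₂ ⟨b, hbB⟩ := hx1'.symm.trans hx1
      have hx3 : (i x : SB) = ⟨b, hbB⟩ := j₂.injective hx2
      have hx4 : (x : M) = b := congrArg Subtype.val hx3
      have := (memA (x : M)).1 x.2
      exact this.2 hx4
    exact hcnE hcE
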